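/- Let G : [0,∞) → ℝ be (h,m)-convex with m ∈ (0,1], where h is nonnegative and integrable on [0,1], and suppose 0 ≤ ν < μ and G is integrable on [mν, mμ] ∪ [ν, μ]. Then (1/(m+1)) · [(1/(mμ - ν)) ∫_ν^{mμ} G(x) dx + (1/(μ - mν)) ∫_{mν}^μ G(x) dx] ≤ (G(ν) + G(μ)) · [∫_0^1 h(γ) dγ + ∫_0^1 h(1-γ) dγ]. -/

import Mathlib

open MeasureTheory intervalIntegral

lemma comp_affine_intble {G : ℝ → ℝ} {c d : ℝ}
    (hG : IntervalIntegrable G volume d (c + d)) :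
    IntervalIntegrable (fun x => G (c * x + d)) volume 0 1 := by
  by_cases hc : c = 0
  · simpa [hc] using intervalIntegrable_const (c := G d) (μ := volume) (a := (0:ℝ)) (b := 1)
  · have h1 : IntervalIntegrable (fun x => G (x + d)) volume 0 c := by
      simpa using hG.comp_add_right d
    have h2 := h1.comp_mul_left (c := c)
    simpa [div_self hc] using h2

lemma comp_affine_int {G : ℝ → ℝ} {c : ℝ} (d : ℝ) (hc : c ≠ 0) :
    ∫ x in (0:ℝ)..1, G (c * x + d) = c⁻¹ * ∫ x in d..(c + d), G x := by
  rw [intervalIntegral.integral_comp_mul_add G hc d]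
  norm_num [smul_eq_mul, add_comm]

theorem hm_convex_HH_second
    (ν μ m : ℝ) (hν : 0 ≤ ν) (hνμ : ν < μ) (hm : m ∈ Set.Ioc (0:ℝ) 1)
    (h : ℝ → ℝ) (hh : ∀ γ ∈ Set.Icc (0:ℝ) 1, 0 ≤ h γ)
    (hhint : IntervalIntegrable h MeasureTheory.volume 0 1)
    (G : ℝ → ℝ)
    (hGnonneg : ∀ x : ℝ, 0 ≤ x → 0 ≤ G x)
    (hGint1 : IntervalIntegrable G MeasureTheory.volume ν (m * μ))
    (hGint2 : IntervalIntegrable G MeasureTheory.volume (m * ν) μ)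
    (hG : ∀ x : ℝ, 0 ≤ x → ∀ y : ℝ, 0 ≤ y → ∀ γ ∈ Set.Icc (0:ℝ) 1,
      G (γ * x + m * (1 - γ) * y) ≤ h γ * G x + m * h (1 - γ) * G y) :
    (1 / (m + 1)) * ((1 / (m * μ - ν)) * (∫ x in ν..(m * μ), G x)
        + (1 / (μ - m * ν)) * ∫ x in (m * ν)..μ, G x)
      ≤ (G ν + G μ) * ((∫ γ in (0:ℝ)..1, h γ) + ∫ γ in (0:ℝ)..1, h (1 - γ)) := by
  obtain ⟨hm0, hm1⟩ := hm
  have hμ0 : 0 ≤ μ := le_trans hν hνμ.le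
  have hGν : 0 ≤ G ν := hGnonneg ν hν
  have hGμ : 0 ≤ G μ := hGnonneg μ hμ0
  set H1 := ∫ γ in (0:ℝ)..1, h γ with hH1
  set H2 := ∫ γ in (0:ℝ)..1, h (1 - γ) with hH2
  set A := ∫ γ in (0:ℝ)..1, G (γ * ν + m * (1 - γ) * μ) with hAdef
  set B := ∫ γ in (0:ℝ)..1, G (γ * μ + m * (1 - γ) * ν) with hBdef
  -- rewrite arguments in affine form
  have eA : (fun γ : ℝ => G (γ * ν + m * (1 - γ) * μ)) =
      fun γ : ℝ => G ((ν - m * μ) * γ + m * μ) := by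
    funext γ; congr 1; ring
  have eB : (fun γ : ℝ => G (γ * μ + m * (1 - γ) * ν)) =
      fun γ : ℝ => G ((μ - m * ν) * γ + m * ν) := by
    funext γ; congr 1; ring
  have hc2 : μ - m * ν ≠ 0 := by nlinarith
  have hintA : IntervalIntegrable (fun γ => G (γ * ν + m * (1 - γ) * μ)) volume 0 1 := by
    rw [eA]
    exact comp_affine_intble (by simpa using hGint1.symm)
  have hintB : IntervalIntegrable (fun γ => G (γ * μ + m * (1 - γ) * ν)) volume 0 1 := by
    rw [eB]
    exact comp_affine_intble (by simpa using hGint2)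
  have hA0 : 0 ≤ A := by
    apply intervalIntegral.integral_nonneg (by norm_num)
    intro γ hγ
    exact hGnonneg _ (add_nonneg (mul_nonneg hγ.1 hν)
      (mul_nonneg (mul_nonneg hm0.le (by linarith [hγ.2])) hμ0))
  have hB0 : 0 ≤ B := by
    apply intervalIntegral.integral_nonneg (by norm_num)
    intro γ hγ
    exact hGnonneg _ (add_nonneg (mul_nonneg hγ.1 hμ0)
      (mul_nonneg (mul_nonneg hm0.le (by linarith [hγ.2])) hν))
  have hH10 : 0 ≤ H1 :=
    intervalIntegral.integral_nonneg (by norm_num) (fun γ hγ => hh γ hγ)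
  have hH20 : 0 ≤ H2 :=
    intervalIntegral.integral_nonneg (by norm_num)
      (fun γ hγ => hh (1 - γ) ⟨by linarith [hγ.2], by linarith [hγ.1]⟩)
  -- first term ≤ A
  have hterm1 : (1 / (m * μ - ν)) * (∫ x in ν..(m * μ), G x) ≤ A := by
    by_cases hc : ν - m * μ = 0
    · have : m * μ - ν = 0 := by linarith
      simp [this]
      exact hA0
    · have := comp_affine_int (G := G) (m * μ) hc
      have harg : (ν - m * μ) + m * μ = ν := by ring
      rw [harg] at this
      have : A = (ν - m * μ)⁻¹ * ∫ x in (m * μ)..ν, G x := by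
        rw [hAdef, eA]; exact this
      apply le_of_eq
      rw [this, intervalIntegral.integral_symm,
        show (ν - m * μ)⁻¹ = -(m * μ - ν)⁻¹ by
          rw [show ν - m * μ = -(m * μ - ν) by ring, inv_neg], one_div]
      ring
  -- second term = B
  have hterm2 : (1 / (μ - m * ν)) * (∫ x in (m * ν)..μ, G x) = B := by
    have := comp_affine_int (G := G) (m * ν) hc2
    have harg : (μ - m * ν) + m * ν = μ := by ring
    rw [harg] at this
    rw [hBdef, eB, this, one_div]
  -- integrability of bounding functions
  have hhint2 : IntervalIntegrable (fun γ => h (1 - γ)) volume 0 1 := by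
    simpa using (hhint.comp_sub_left 1).symm
  have hbdd1 : IntervalIntegrable
      (fun γ => h γ * G ν + m * h (1 - γ) * G μ) volume 0 1 := by
    apply (hhint.mul_const (G ν)).add
    have : IntervalIntegrable (fun γ => m * h (1 - γ)) volume 0 1 := hhint2.const_mul m
    exact this.mul_const (G μ)
  have hbdd2 : IntervalIntegrable
      (fun γ => h γ * G μ + m * h (1 - γ) * G ν) volume 0 1 := by
    apply (hhint.mul_const (G μ)).add
    exact (hhint2.const_mul m).mul_const (G ν)
  -- integral computation of the bounds
  have hval1 : (∫ γ in (0:ℝ)..1, (h γ * G ν + m * h (1 - γ) * G μ))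
      = H1 * G ν + m * H2 * G μ := by
    rw [intervalIntegral.integral_add (hhint.mul_const (G ν))
        ((hhint2.const_mul m).mul_const (G μ)),
      intervalIntegral.integral_mul_const, intervalIntegral.integral_mul_const,
      intervalIntegral.integral_const_mul]
  have hval2 : (∫ γ in (0:ℝ)..1, (h γ * G μ + m * h (1 - γ) * G ν))
      = H1 * G μ + m * H2 * G ν := by
    rw [intervalIntegral.integral_add (hhint.mul_const (G μ))
        ((hhint2.const_mul m).mul_const (G ν)),
      intervalIntegral.integral_mul_const, intervalIntegral.integral_mul_const,
      intervalIntegral.integral_const_mul]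
  have keyA : A ≤ H1 * G ν + m * H2 * G μ := by
    rw [← hval1]
    exact intervalIntegral.integral_mono_on (by norm_num) hintA hbdd1
      (fun γ hγ => hG ν hν μ hμ0 γ hγ)
  have keyB : B ≤ H1 * G μ + m * H2 * G ν := by
    rw [← hval2]
    exact intervalIntegral.integral_mono_on (by norm_num) hintB hbdd2
      (fun γ hγ => hG μ hμ0 ν hν γ hγ)
  -- finish
  have hT0 : 0 ≤ H1 * (G ν + G μ) + m * H2 * (G ν + G μ) := by positivity
  have hS : (1 / (m * μ - ν)) * (∫ x in ν..(m * μ), G x)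
      + (1 / (μ - m * ν)) * (∫ x in (m * ν)..μ, G x)
      ≤ H1 * (G ν + G μ) + m * H2 * (G ν + G μ) := by
    rw [hterm2]; nlinarith
  have hinv : 0 < 1 / (m + 1) := by positivity
  calc (1 / (m + 1)) * ((1 / (m * μ - ν)) * (∫ x in ν..(m * μ), G x)
        + (1 / (μ - m * ν)) * ∫ x in (m * ν)..μ, G x)
      ≤ (1 / (m + 1)) * (H1 * (G ν + G μ) + m * H2 * (G ν + G μ)) :=
        mul_le_mul_of_nonneg_left hS hinv.le
    _ ≤ H1 * (G ν + G μ) + m * H2 * (G ν + G μ) := by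
        have : 1 / (m + 1) ≤ 1 := by
          rw [div_le_one (by linarith)]; linarith
        nlinarith
    _ ≤ (G ν + G μ) * (H1 + H2) := by
        nlinarith [mul_nonneg (mul_nonneg (by linarith : (0:ℝ) ≤ 1 - m) hH20)
          (add_nonneg hGν hGμ)]
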